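/- Representation of the Gâteaux derivative via the Hamiltonian: Let U, Ū ∈ (ℝ^m)^{N+1}. Then the limit DL^α_h(U)(Ū) = lim_{ε→0} (L^α_h(U+εŪ) − L^α_h(U))/ε exists and equals h ∑_{k=1}^{N} ∂H/∂v(Q^{U}_k, U_k, P^{U}_{k−1}, t_k) · Ū_k. -/

import Mathlib

open Finset Filter
open scoped RealInnerProductSpace Topology

noncomputable section

/-- `ℝ^n` with the euclidean norm. -/
abbrev Euc (n : ℕ) : Type := EuclideanSpace ℝ (Fin n)

/-- The Grünwald–Letnikov coefficients `α_r = (−α)(1−α)⋯(r−1−α)/r!`, with `α_0 = 1`. -/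
def glCoef (α : ℝ) (r : ℕ) : ℝ :=
  (∏ i ∈ Finset.range r, ((i : ℝ) - α)) / (Nat.factorial r : ℝ)

/-- Left discrete fractional derivative `(Δ^α_− G)_k = h^{−α} ∑_{r=0}^{k} α_r G_{k−r}`. -/
def dMinus {n : ℕ} (α h : ℝ) (G : ℕ → Euc n) (k : ℕ) : Euc n :=
  (h ^ (-α)) • ∑ r ∈ Finset.range (k + 1), glCoef α r • G (k - r)

/-- Right discrete fractional derivative `(Δ^α_+ G)_k = h^{−α} ∑_{r=0}^{N−k} α_r G_{k+r}`. -/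
def dPlus {n : ℕ} (N : ℕ) (α h : ℝ) (G : ℕ → Euc n) (k : ℕ) : Euc n :=
  (h ^ (-α)) • ∑ r ∈ Finset.range (N - k + 1), glCoef α r • G (k + r)

/-- Left Caputo discrete fractional derivative `(ᶜΔ^α_− G)_k = h^{−α} ∑_{r=0}^{k} α_r (G_{k−r} − G_0)`. -/
def cdMinus {n : ℕ} (α h : ℝ) (G : ℕ → Euc n) (k : ℕ) : Euc n :=
  dMinus α h (fun j => G j - G 0) k

/-- Right Caputo discrete fractional derivative
`(ᶜΔ^α_+ G)_k = h^{−α} ∑_{r=0}^{N−k} α_r (G_{k+r} − G_N)`. -/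
def cdPlus {n : ℕ} (N : ℕ) (α h : ℝ) (G : ℕ → Euc n) (k : ℕ) : Euc n :=
  dPlus N α h (fun j => G j - G N) k

/-- The Hamiltonian `H(x,v,w,t) = L(x,v,t) + w · f(x,v,t)` associated to the Lagrangian `L`
and the constraint function `f`. -/
def Ham {d m : ℕ} (L : Euc d → Euc m → ℝ → ℝ) (f : Euc d → Euc m → ℝ → Euc d)
    (x : Euc d) (v : Euc m) (w : Euc d) (t : ℝ) : ℝ :=
  L x v t + ⟪w, f x v t⟫

open Fin.NatCast

theorem glCoef_zero (α : ℝ) : glCoef α 0 = 1 := by simp [glCoef]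

theorem exists_hasDerivAt_of_implicit
    {X : Type*} [NormedAddCommGroup X] [NormedSpace ℝ X] [FiniteDimensional ℝ X]
    (F : ℝ × X → X) (hF : ContDiff ℝ 1 F)
    (g : ℝ → X) (hg : ∀ ε, F (ε, g ε) = 0)
    (huniq : ∀ ε (x x' : X), F (ε, x) = 0 → F (ε, x') = 0 → x = x')
    (hinj : ∀ v : X, fderiv ℝ F (0, g 0) (0, v) = 0 → v = 0) :
    ∃ y : X, HasDerivAt g y 0 := by
  classical
  set p₀ : ℝ × X := (0, g 0) with hp₀
  set J : ℝ × X →L[ℝ] ℝ × X :=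
    (ContinuousLinearMap.fst ℝ ℝ X).prod (fderiv ℝ F p₀) with hJ
  have hJinj : Function.Injective J := by
    intro w w' hww'
    have h1' := congrArg (Prod.fst : ℝ × X → ℝ) hww'
    have h2' := congrArg (Prod.snd : ℝ × X → X) hww'
    simp only [hJ, ContinuousLinearMap.prod_apply, ContinuousLinearMap.coe_fst'] at h1' h2'
    have h1 : w.1 = w'.1 := h1'
    have h2 : fderiv ℝ F p₀ w = fderiv ℝ F p₀ w' := h2'
    have : fderiv ℝ F p₀ (0, w.2 - w'.2) = 0 := by
      have hw : ((0 : ℝ), w.2 - w'.2) = w - w' := by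
        ext
        · simp [h1]
        · simp
      rw [hw, map_sub, h2, sub_self]
    have := hinj _ this
    have h3 : w.2 = w'.2 := by
      have := sub_eq_zero.mp this
      exact this
    exact Prod.ext h1 h3
  have hJsurj : Function.Surjective J := by
    have := (LinearMap.injective_iff_surjective (f := (J : ℝ × X →ₗ[ℝ] ℝ × X))).mp hJinj
    exact this
  let eJ : (ℝ × X) ≃L[ℝ] (ℝ × X) :=
    (LinearEquiv.ofBijective (J : ℝ × X →ₗ[ℝ] ℝ × X) ⟨hJinj, hJsurj⟩).toContinuousLinearEquiv
  have heJ : (eJ : ℝ × X →L[ℝ] ℝ × X) = J := by ext w <;> rfl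
  set Φ : ℝ × X → ℝ × X := fun p => (p.1, F p) with hΦ
  have hΦstrict : HasStrictFDerivAt Φ (eJ : ℝ × X →L[ℝ] ℝ × X) p₀ := by
    rw [heJ, hJ]
    exact HasStrictFDerivAt.prodMk hasStrictFDerivAt_fst ((hF.contDiffAt).hasStrictFDerivAt one_ne_zero)
  have hΦp₀ : Φ p₀ = (0, 0) := by simp [hΦ, hp₀, hg 0]
  set ginv := hΦstrict.localInverse Φ _ p₀ with hginv
  have hinv : HasStrictFDerivAt ginv (eJ.symm : ℝ × X →L[ℝ] ℝ × X) ((0 : ℝ), (0 : X)) := by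
    rw [← hΦp₀]; exact hΦstrict.to_localInverse
  have hc : HasDerivAt (fun ε : ℝ => ((ε, (0 : X)) : ℝ × X)) ((1 : ℝ), (0 : X)) 0 :=
    (hasDerivAt_id 0).prodMk (hasDerivAt_const 0 0)
  have hψ : HasDerivAt (fun ε : ℝ => (ginv (ε, 0)).2) ((eJ.symm ((1 : ℝ), (0 : X))).2) 0 := by
    have h1 : HasDerivAt (fun ε : ℝ => ginv (ε, 0)) (eJ.symm ((1 : ℝ), (0 : X))) 0 := by
      have := hinv.hasFDerivAt.comp_hasDerivAt 0 hc
      exact this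
    exact ((ContinuousLinearMap.snd ℝ ℝ X).hasFDerivAt.comp_hasDerivAt 0 h1)
  have hev : ∀ᶠ ε in 𝓝 (0 : ℝ), g ε = (ginv (ε, 0)).2 := by
    have h1 : ∀ᶠ y in 𝓝 (Φ p₀), Φ (ginv y) = y := hΦstrict.eventually_right_inverse
    rw [hΦp₀] at h1
    have hcont : ContinuousAt (fun ε : ℝ => ((ε, (0 : X)) : ℝ × X)) 0 :=
      (continuous_id.prodMk continuous_const).continuousAt
    have h2 : ∀ᶠ ε in 𝓝 (0 : ℝ), Φ (ginv (ε, 0)) = (ε, 0) := hcont.eventually h1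
    filter_upwards [h2] with ε hε
    have he1 : (ginv (ε, 0)).1 = ε := congrArg Prod.fst hε
    have he2 : F (ginv (ε, 0)) = 0 := congrArg Prod.snd hε
    have he3 : F (ε, (ginv (ε, 0)).2) = 0 := by
      have : ((ε, (ginv (ε, 0)).2) : ℝ × X) = ginv (ε, 0) := by
        ext
        · exact he1.symm
        · rfl
      rw [this]; exact he2
    exact huniq ε (g ε) _ (hg ε) he3
  exact ⟨_, hψ.congr_of_eventuallyEq hev⟩


theorem sum_Icc_one_eq_range {E : Type*} [AddCommMonoid E] (φ : ℕ → E) (k : ℕ) :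
    ∑ r ∈ Finset.Icc 1 k, φ r = ∑ r ∈ Finset.range k, φ (r + 1) := by
  rw [← Finset.Ico_add_one_right_eq_Icc, Finset.sum_Ico_eq_sum_range]
  exact Finset.sum_congr (by norm_num) fun r _ => by rw [Nat.add_comm 1 r]

theorem sum_range_succ_eq_Icc {E : Type*} [AddCommMonoid E] (φ : ℕ → E) (k : ℕ) :
    ∑ r ∈ Finset.range (k + 1), φ r = φ 0 + ∑ r ∈ Finset.Icc 1 k, φ r := by
  rw [Finset.sum_range_succ', sum_Icc_one_eq_range, add_comm]

set_option maxHeartbeats 2000000 in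
/-- **Representation of the Gâteaux derivative of the discrete cost functional via the
Hamiltonian and the discrete adjoint variable.** -/
theorem gateaux_derivative_via_hamiltonian
    (d m N : ℕ) (hd : 1 ≤ d) (hm : 1 ≤ m) (hN : 1 ≤ N)
    (a b : ℝ) (hab : a < b) (α : ℝ) (hα : 0 < α) (hα1 : α ≤ 1)
    (A : Euc d)
    (f : Euc d → Euc m → ℝ → Euc d)
    (hf : ContDiff ℝ 2 fun p : Euc d × Euc m × ℝ => f p.1 p.2.1 p.2.2)
    (L : Euc d → Euc m → ℝ → ℝ)
    (hL : ContDiff ℝ 2 fun p : Euc d × Euc m × ℝ => L p.1 p.2.1 p.2.2)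
    (M : ℝ) (hM : 0 ≤ M)
    (hLip : ∀ (x₁ x₂ : Euc d) (v : Euc m), ∀ t ∈ Set.Icc a b,
      ‖f x₁ v t - f x₂ v t‖ ≤ M * ‖x₁ - x₂‖)
    (hMsmall : 2 * ((b - a) / (N : ℝ)) ^ α * M < 1)
    -- `SQ V` is the discrete state variable associated to the discrete control `V`
    (SQ : (ℕ → Euc m) → ℕ → Euc d)
    (hSQ : ∀ V : ℕ → Euc m, SQ V 0 = A ∧ ∀ k, 1 ≤ k → k ≤ N →
      cdMinus α ((b - a) / (N : ℝ)) (SQ V) k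
        = f (SQ V k) (V k) (a + (k : ℝ) * ((b - a) / (N : ℝ))))
    (U Ubar : ℕ → Euc m)
    -- `P` is the discrete adjoint variable associated to the discrete control `U`
    (P : ℕ → Euc d) (hPN : P N = 0)
    (hP : ∀ k, k < N →
      cdPlus N α ((b - a) / (N : ℝ)) P k
        = gradient (fun x => L x (U (k + 1)) (a + ((k : ℝ) + 1) * ((b - a) / (N : ℝ))))
            (SQ U (k + 1))
          + (ContinuousLinearMap.adjoint
              (fderiv ℝ (fun x => f x (U (k + 1)) (a + ((k : ℝ) + 1) * ((b - a) / (N : ℝ))))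
                (SQ U (k + 1)))) (P k)) :
    Filter.Tendsto
      (fun ε : ℝ =>
        ((((b - a) / (N : ℝ)) * ∑ k ∈ Finset.Icc 1 N,
            L (SQ (fun j => U j + ε • Ubar j) k) (U k + ε • Ubar k)
              (a + (k : ℝ) * ((b - a) / (N : ℝ)))) -
          ((b - a) / (N : ℝ)) * ∑ k ∈ Finset.Icc 1 N,
            L (SQ U k) (U k) (a + (k : ℝ) * ((b - a) / (N : ℝ)))) / ε)
      (𝓝[≠] (0 : ℝ))
      (𝓝 (((b - a) / (N : ℝ)) * ∑ k ∈ Finset.Icc 1 N,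
        (fderiv ℝ (fun v => Ham L f (SQ U k) v (P (k - 1)) (a + (k : ℝ) * ((b - a) / (N : ℝ))))
          (U k)) (Ubar k))) := by
  classical
  have hN0 : (0:ℝ) < (N:ℝ) := by exact_mod_cast hN
  set h : ℝ := (b - a) / (N : ℝ) with hh
  have hh0 : 0 < h := div_pos (by linarith) hN0
  have hhα0 : 0 < h ^ α := Real.rpow_pos_of_pos hh0 α
  have hrpow : h ^ (-α) = (h ^ α)⁻¹ := Real.rpow_neg hh0.le α
  have hcontr : h ^ α * M < 1 := by nlinarith
  have hNh : (N : ℝ) * h = b - a := by rw [hh]; field_simp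
  have htmem : ∀ k : ℕ, k ≤ N → a + (k:ℝ) * h ∈ Set.Icc a b := by
    intro k hk
    constructor
    · nlinarith [Nat.cast_nonneg (α := ℝ) k]
    · have : (k:ℝ) ≤ (N:ℝ) := by exact_mod_cast hk
      nlinarith
  -- rearranged recurrence
  have hrec : ∀ (V : ℕ → Euc m) (k : ℕ), 1 ≤ k → k ≤ N →
      (SQ V k - A) + ∑ r ∈ Finset.Icc 1 k, glCoef α r • (SQ V (k - r) - A)
        = (h ^ α) • f (SQ V k) (V k) (a + (k:ℝ) * h) := by
    intro V k hk1 hkN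
    have h0 : SQ V 0 = A := (hSQ V).1
    have h2 := (hSQ V).2 k hk1 hkN
    rw [cdMinus, dMinus] at h2
    have h3 : (h ^ α) • f (SQ V k) (V k) (a + (k:ℝ) * h)
        = ∑ r ∈ Finset.range (k + 1), glCoef α r • (SQ V (k - r) - A) := by
      rw [← h2, smul_smul, hrpow, mul_inv_cancel₀ hhα0.ne', one_smul]
      simp [h0]
    rw [h3, Finset.sum_range_succ']
    have h4 : ∑ r ∈ Finset.Icc 1 k, glCoef α r • (SQ V (k - r) - A)
        = ∑ r ∈ Finset.range k, glCoef α (r + 1) • (SQ V (k - (r + 1)) - A) := by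
      rw [← Finset.Ico_add_one_right_eq_Icc, Finset.sum_Ico_eq_sum_range]
      simp only [Nat.add_sub_cancel]
      exact Finset.sum_congr rfl fun r _ => by rw [Nat.add_comm 1 r]
    rw [h4, glCoef_zero, Nat.sub_zero, one_smul, add_comm]
  -- the finite-dimensional state space
  set pert : ℝ → ℕ → Euc m := fun ε j => U j + ε • Ubar j with hpert
  set tt : ℕ → ℝ := fun k => a + (k : ℝ) * h with htt
  set fc : Euc d × Euc m × ℝ → Euc d := fun p => f p.1 p.2.1 p.2.2 with hfc
  set Lc : Euc d × Euc m × ℝ → ℝ := fun p => L p.1 p.2.1 p.2.2 with hLc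
  set F : ℝ × (Fin (N + 1) → Euc d) → (Fin (N + 1) → Euc d) := fun p i =>
    if 1 ≤ (i : ℕ) then
      (p.2 i - A) + ∑ r ∈ Finset.Icc 1 (i : ℕ),
          glCoef α r • (p.2 ((((i : ℕ) - r : ℕ)) : Fin (N + 1)) - A)
        - (h ^ α) • fc (p.2 i, (U (i : ℕ) + p.1 • Ubar (i : ℕ), tt (i : ℕ)))
    else p.2 i - A
    with hF
  set g : ℝ → Fin (N + 1) → Euc d := fun ε i => SQ (pert ε) (i : ℕ) with hg
  have hcast : ∀ r : ℕ, r ≤ N → (((r : Fin (N + 1))) : ℕ) = r :=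
    fun r hr => Fin.val_cast_of_lt (by omega)
  have hiN : ∀ i : Fin (N + 1), (i : ℕ) ≤ N := fun i => by omega
  -- F vanishes along g
  have hFg : ∀ ε, F (ε, g ε) = 0 := by
    intro ε
    funext i
    by_cases h1 : 1 ≤ (i : ℕ)
    · simp only [hF, if_pos h1, Pi.zero_apply]
      have hsum : ∑ r ∈ Finset.Icc 1 (i : ℕ),
            glCoef α r • (g ε ((((i : ℕ) - r : ℕ)) : Fin (N + 1)) - A)
          = ∑ r ∈ Finset.Icc 1 (i : ℕ), glCoef α r • (SQ (pert ε) ((i : ℕ) - r) - A) := by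
        refine Finset.sum_congr rfl fun r _ => ?_
        simp only [hg, hcast ((i : ℕ) - r) (by omega)]
      rw [hsum]
      have := hrec (pert ε) (i : ℕ) h1 (hiN i)
      rw [sub_eq_zero]
      exact this
    · simp only [hF, if_neg h1, Pi.zero_apply]
      have h0 : (i : ℕ) = 0 := by omega
      simp only [hg, h0, (hSQ (pert ε)).1, sub_self]
  -- uniqueness of solutions of F(ε,·)=0
  have huniq : ∀ ε (x x' : Fin (N + 1) → Euc d),
      F (ε, x) = 0 → F (ε, x') = 0 → x = x' := by
    intro ε x x' hx hx'
    have key : ∀ n : ℕ, ∀ i : Fin (N + 1), (i : ℕ) = n → x i = x' i := by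
      intro n
      induction n using Nat.strong_induction_on with
      | _ n IH =>
        intro i hi
        have hxi := congrFun hx i
        have hxi' := congrFun hx' i
        by_cases h1 : 1 ≤ (i : ℕ)
        · simp only [hF, if_pos h1, Pi.zero_apply] at hxi hxi'
          have hsum : ∑ r ∈ Finset.Icc 1 (i : ℕ),
                glCoef α r • (x ((((i : ℕ) - r : ℕ)) : Fin (N + 1)) - A)
              = ∑ r ∈ Finset.Icc 1 (i : ℕ),
                glCoef α r • (x' ((((i : ℕ) - r : ℕ)) : Fin (N + 1)) - A) := by
            refine Finset.sum_congr rfl fun r hr => ?_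
            obtain ⟨hr1, hrk⟩ := Finset.mem_Icc.mp hr
            rw [IH ((i : ℕ) - r) (by omega) _ (hcast _ (by omega))]
          have e1 : (x i - A) + ∑ r ∈ Finset.Icc 1 (i : ℕ),
                glCoef α r • (x' ((((i : ℕ) - r : ℕ)) : Fin (N + 1)) - A)
              = (h ^ α) • fc (x i, (U (i : ℕ) + ε • Ubar (i : ℕ), tt (i : ℕ))) := by
            rw [← hsum]; rw [sub_eq_zero] at hxi; exact hxi
          have e2 : (x' i - A) + ∑ r ∈ Finset.Icc 1 (i : ℕ),
                glCoef α r • (x' ((((i : ℕ) - r : ℕ)) : Fin (N + 1)) - A)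
              = (h ^ α) • fc (x' i, (U (i : ℕ) + ε • Ubar (i : ℕ), tt (i : ℕ))) := by
            rw [sub_eq_zero] at hxi'; exact hxi'
          have hdiff : x i - x' i
              = (h ^ α) • (fc (x i, (U (i : ℕ) + ε • Ubar (i : ℕ), tt (i : ℕ)))
                - fc (x' i, (U (i : ℕ) + ε • Ubar (i : ℕ), tt (i : ℕ)))) := by
            rw [smul_sub, ← e1, ← e2]; abel
          have hlip2 : ‖fc (x i, (U (i : ℕ) + ε • Ubar (i : ℕ), tt (i : ℕ)))
                - fc (x' i, (U (i : ℕ) + ε • Ubar (i : ℕ), tt (i : ℕ)))‖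
              ≤ M * ‖x i - x' i‖ :=
            hLip (x i) (x' i) (U (i : ℕ) + ε • Ubar (i : ℕ)) (tt (i : ℕ)) (htmem _ (hiN i))
          have hnorm1 : ‖x i - x' i‖ = h ^ α *
              ‖fc (x i, (U (i : ℕ) + ε • Ubar (i : ℕ), tt (i : ℕ)))
                - fc (x' i, (U (i : ℕ) + ε • Ubar (i : ℕ), tt (i : ℕ)))‖ := by
            rw [hdiff, norm_smul, Real.norm_eq_abs, abs_of_pos hhα0]
          have hnorm : ‖x i - x' i‖ ≤ h ^ α * (M * ‖x i - x' i‖) :=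
            calc ‖x i - x' i‖
                = h ^ α * ‖fc (x i, (U (i : ℕ) + ε • Ubar (i : ℕ), tt (i : ℕ)))
                  - fc (x' i, (U (i : ℕ) + ε • Ubar (i : ℕ), tt (i : ℕ)))‖ := hnorm1
              _ ≤ h ^ α * (M * ‖x i - x' i‖) :=
                  mul_le_mul_of_nonneg_left hlip2 hhα0.le
          have hz : ‖x i - x' i‖ = 0 := by nlinarith [norm_nonneg (x i - x' i)]
          exact sub_eq_zero.mp (norm_eq_zero.mp hz)
        · simp only [hF, if_neg h1, Pi.zero_apply] at hxi hxi'
          rw [sub_eq_zero] at hxi hxi'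
          rw [hxi, hxi']
    funext i
    exact key _ i rfl
  -- smoothness of F
  have hfc1 : ContDiff ℝ 1 fc := hf.of_le one_le_two
  have hLc1 : ContDiff ℝ 1 Lc := hL.of_le one_le_two
  have hproj : ∀ j : Fin (N + 1), ContDiff ℝ 1 fun p : ℝ × (Fin (N + 1) → Euc d) => p.2 j :=
    fun j => ((ContinuousLinearMap.proj (R := ℝ) (φ := fun _ : Fin (N + 1) => Euc d) j).comp (ContinuousLinearMap.snd ℝ ℝ _)).contDiff
  have hFsmooth : ContDiff ℝ 1 F := by
    rw [contDiff_pi]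
    intro i
    by_cases h1 : 1 ≤ (i : ℕ)
    · simp only [hF, if_pos h1]
      refine ContDiff.sub (ContDiff.add ((hproj i).sub contDiff_const) ?_) ?_
      · exact ContDiff.sum fun r _ => ContDiff.const_smul _ ((hproj _).sub contDiff_const)
      · refine ContDiff.const_smul _ (hfc1.comp ?_)
        exact (hproj i).prodMk
          ((contDiff_const.add (contDiff_fst.smul contDiff_const)).prodMk contDiff_const)
    · simp only [hF, if_neg h1]
      exact (hproj i).sub contDiff_const
  have hFdiff := hFsmooth.differentiable one_ne_zero
  have hfdiff := hf.differentiable (by norm_num)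
  have hLdiff := hL.differentiable (by norm_num)
  -- derivative of the components of F along a differentiable curve
  have hderivF : ∀ (i : Fin (N + 1)), 1 ≤ (i : ℕ) →
      ∀ (z : ℝ → Fin (N + 1) → Euc d) (w : Fin (N + 1) → Euc d) (u : ℝ → ℝ) (u' s₀ : ℝ),
      (∀ j, HasDerivAt (fun s => z s j) (w j) s₀) → HasDerivAt u u' s₀ →
      HasDerivAt (fun s => F (u s, z s) i)
        (w i + ∑ r ∈ Finset.Icc 1 (i : ℕ),
            glCoef α r • w ((((i : ℕ) - r : ℕ)) : Fin (N + 1))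
          - (h ^ α) • (fderiv ℝ fc
              (z s₀ i, (U (i : ℕ) + u s₀ • Ubar (i : ℕ), tt (i : ℕ))))
              (w i, (u' • Ubar (i : ℕ), (0 : ℝ)))) s₀ := by
    intro i h1 z w u u' s₀ hz hu
    simp only [hF, if_pos h1]
    refine HasDerivAt.sub (HasDerivAt.add ((hz i).sub_const A)
      (HasDerivAt.fun_sum fun r _ => HasDerivAt.const_smul (glCoef α r) ((hz _).sub_const A))) ?_
    refine HasDerivAt.const_smul (h ^ α) ?_
    have hin : HasDerivAt
        (fun s => ((z s i, (U (i : ℕ) + u s • Ubar (i : ℕ), tt (i : ℕ)))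
          : Euc d × Euc m × ℝ))
        ((w i, (u' • Ubar (i : ℕ), (0 : ℝ)))) s₀ :=
      (hz i).prodMk (((hu.smul_const (Ubar (i : ℕ))).const_add (U (i : ℕ))).prodMk
        (hasDerivAt_const _ _))
    exact ((hfdiff _).hasFDerivAt).comp_hasDerivAt s₀ hin
  -- the partial derivative of f in x, and its norm bound
  have hpartx : ∀ (x₀ : Euc d) (v' : Euc m) (t' : ℝ),
      HasFDerivAt (fun x : Euc d => f x v' t')
        ((fderiv ℝ fc (x₀, (v', t'))).comp
          ((ContinuousLinearMap.id ℝ (Euc d)).prod (0 : Euc d →L[ℝ] Euc m × ℝ))) x₀ := by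
    intro x₀ v' t'
    have hi : HasFDerivAt (fun x : Euc d => ((x, (v', t')) : Euc d × Euc m × ℝ))
        ((ContinuousLinearMap.id ℝ (Euc d)).prod 0) x₀ :=
      (hasFDerivAt_id x₀).prodMk (hasFDerivAt_const (v', t') x₀)
    exact ((hfdiff _).hasFDerivAt).comp x₀ hi
  have hDxle : ∀ (x₀ : Euc d) (v' : Euc m) (t' : ℝ), t' ∈ Set.Icc a b → ∀ u : Euc d,
      ‖fderiv ℝ fc (x₀, (v', t')) (u, ((0 : Euc m), (0 : ℝ)))‖ ≤ M * ‖u‖ := by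
    intro x₀ v' t' ht u
    have hlipw : LipschitzWith (Real.toNNReal M) (fun x : Euc d => f x v' t') :=
      LipschitzWith.of_dist_le_mul fun x₁ x₂ => by
        rw [dist_eq_norm, dist_eq_norm, Real.coe_toNNReal M hM]
        exact hLip x₁ x₂ v' t' ht
    have hle := (hpartx x₀ v' t').le_of_lipschitz hlipw
    rw [Real.coe_toNNReal M hM] at hle
    have happ : fderiv ℝ fc (x₀, (v', t')) (u, ((0 : Euc m), (0 : ℝ)))
        = ((fderiv ℝ fc (x₀, (v', t'))).comp
            ((ContinuousLinearMap.id ℝ (Euc d)).prod (0 : Euc d →L[ℝ] Euc m × ℝ))) u := rfl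
    rw [happ]
    calc ‖_‖ ≤ ‖(fderiv ℝ fc (x₀, (v', t'))).comp
            ((ContinuousLinearMap.id ℝ (Euc d)).prod (0 : Euc d →L[ℝ] Euc m × ℝ))‖ * ‖u‖ :=
          ContinuousLinearMap.le_opNorm _ u
      _ ≤ M * ‖u‖ := mul_le_mul_of_nonneg_right hle (norm_nonneg u)
  -- injectivity of the partial differential of F in the state directions
  have hinj : ∀ v : Fin (N + 1) → Euc d, fderiv ℝ F ((0 : ℝ), g 0) ((0 : ℝ), v) = 0 → v = 0 := by
    intro v hv
    set c : ℝ → ℝ × (Fin (N + 1) → Euc d) := fun s => ((0 : ℝ), g 0 + s • v) with hc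
    have hc0 : c 0 = ((0 : ℝ), g 0) := by simp [hc]
    have hzd : ∀ j, HasDerivAt (fun s : ℝ => (g 0 + s • v) j) (v j) 0 := by
      intro j
      have := ((hasDerivAt_id (0 : ℝ)).smul_const (v j)).const_add (g 0 j)
      simpa using this
    have hcd : HasDerivAt c ((0 : ℝ), v) 0 := by
      refine (hasDerivAt_const 0 (0 : ℝ)).prodMk ?_
      rw [hasDerivAt_pi]
      exact hzd
    have hFat : HasFDerivAt F (fderiv ℝ F ((0 : ℝ), g 0)) (c 0) := by
      rw [hc0]; exact (hFdiff _).hasFDerivAt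
    have hcomp := hFat.comp_hasDerivAt 0 hcd
    have hci : ∀ i : Fin (N + 1),
        HasDerivAt (fun s => F (c s) i) (fderiv ℝ F ((0 : ℝ), g 0) ((0 : ℝ), v) i) 0 :=
      fun i => hasDerivAt_pi.mp hcomp i
    have key : ∀ n : ℕ, ∀ i : Fin (N + 1), (i : ℕ) = n → v i = 0 := by
      intro n
      induction n using Nat.strong_induction_on with
      | _ n IH =>
        intro i hi
        by_cases h1 : 1 ≤ (i : ℕ)
        · have hder := hderivF i h1 (fun s => g 0 + s • v) v (fun _ => (0 : ℝ)) 0 0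
            hzd (hasDerivAt_const 0 0)
          have heq := (hci i).unique hder
          rw [hv] at heq
          have hsum0 : ∑ r ∈ Finset.Icc 1 (i : ℕ),
              glCoef α r • v ((((i : ℕ) - r : ℕ)) : Fin (N + 1)) = 0 := by
            refine Finset.sum_eq_zero fun r hr => ?_
            obtain ⟨hr1, hrk⟩ := Finset.mem_Icc.mp hr
            rw [IH ((i : ℕ) - r) (by omega) _ (hcast _ (by omega)), smul_zero]
          simp only [Pi.zero_apply, Pi.add_apply, Pi.smul_apply, zero_smul, add_zero,
            hsum0] at heq
          have hvi : v i = (h ^ α) • fderiv ℝ fc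
              (g 0 i, (U (i : ℕ), tt (i : ℕ))) (v i, ((0 : Euc m), (0 : ℝ))) :=
            (sub_eq_zero.mp heq.symm)
          have hb := hDxle (g 0 i) (U (i : ℕ)) (tt (i : ℕ)) (htmem _ (hiN i)) (v i)
          have hn := congrArg (fun z : Euc d => ‖z‖) hvi
          simp only [norm_smul, Real.norm_eq_abs, abs_of_pos hhα0] at hn
          have hnorm : ‖v i‖ ≤ h ^ α * (M * ‖v i‖) :=
            calc ‖v i‖ = h ^ α * ‖fderiv ℝ fc (g 0 i, (U (i : ℕ), tt (i : ℕ)))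
                  (v i, ((0 : Euc m), (0 : ℝ)))‖ := hn
              _ ≤ h ^ α * (M * ‖v i‖) := mul_le_mul_of_nonneg_left hb hhα0.le
          have hz' : ‖v i‖ = 0 := by nlinarith [norm_nonneg (v i)]
          exact norm_eq_zero.mp hz'
        · -- component 0
          have hder : HasDerivAt (fun s => F (c s) i) (v i) 0 := by
            simp only [hF, if_neg h1]
            exact (hzd i).sub_const A
          have := (hci i).unique hder
          rw [hv, Pi.zero_apply] at this
          exact this.symm
    funext i
    rw [Pi.zero_apply]
    exact key _ i rfl
  obtain ⟨y, hy⟩ := exists_hasDerivAt_of_implicit F hFsmooth g hFg huniq hinj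
  have hyi : ∀ i, HasDerivAt (fun ε => g ε i) (y i) 0 := fun i => hasDerivAt_pi.mp hy i
  -- g at 0 is the unperturbed state
  have hpert0 : pert 0 = U := by funext j; simp [hpert]
  have hg0 : ∀ i : Fin (N + 1), g 0 i = SQ U (i : ℕ) := by
    intro i; show SQ (pert 0) (i : ℕ) = SQ U (i : ℕ); rw [hpert0]
  have hgA : ∀ ε, g ε 0 = A := by
    intro ε
    have := congrFun (hFg ε) 0
    simp only [hF, Fin.val_zero, Pi.zero_apply] at this
    simp only [Nat.le_zero, one_ne_zero, if_false, ite_false] at this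
    exact sub_eq_zero.mp this
  have hy0 : y 0 = 0 := by
    have hconst : HasDerivAt (fun ε : ℝ => g ε 0) 0 0 :=
      (hasDerivAt_const (0 : ℝ) A).congr_of_eventuallyEq (Eventually.of_forall hgA)
    exact (hyi 0).unique hconst
  -- the linearized state equation
  have hlin : ∀ n : ℕ, 1 ≤ n → n ≤ N →
      y ((n : Fin (N + 1))) + ∑ r ∈ Finset.Icc 1 n,
          glCoef α r • y (((n - r : ℕ)) : Fin (N + 1))
        = (h ^ α) • (fderiv ℝ fc (SQ U n, (U n, tt n)))
            (y ((n : Fin (N + 1))), (Ubar n, (0 : ℝ))) := by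
    intro n hn1 hnN
    have hi : ((n : Fin (N + 1)) : ℕ) = n := hcast n hnN
    have h1 : 1 ≤ ((n : Fin (N + 1)) : ℕ) := by omega
    have hder := hderivF (n : Fin (N + 1)) h1 g y (fun s => s) 1 0 hyi (hasDerivAt_id 0)
    have hconst : HasDerivAt (fun s : ℝ => F ((fun s : ℝ => s) s, g s) ((n : Fin (N + 1)))) 0 0 :=
      (hasDerivAt_const (0 : ℝ) 0).congr_of_eventuallyEq
        (Eventually.of_forall fun s => congrFun (hFg s) _)
    have heq := hconst.unique hder
    simp only [hi, hg0, zero_smul, add_zero, one_smul] at heq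
    exact sub_eq_zero.mp heq.symm
  -- the rearranged adjoint equation
  have hadj : ∀ j : ℕ, 1 ≤ j → j ≤ N →
      ∑ r ∈ Finset.range (N - j + 2), glCoef α r • P (j - 1 + r)
        = (h ^ α) • (gradient (fun x => L x (U j) (tt j)) (SQ U j)
            + (ContinuousLinearMap.adjoint
                (fderiv ℝ (fun x => f x (U j) (tt j)) (SQ U j))) (P (j - 1))) := by
    intro j hj1 hjN
    have hPj := hP (j - 1) (by omega)
    rw [cdPlus, dPlus] at hPj
    simp only [hPN, sub_zero] at hPj
    have hidx : N - (j - 1) + 1 = N - j + 2 := by omega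
    have hj1' : j - 1 + 1 = j := by omega
    have hcastj : ((j - 1 : ℕ) : ℝ) + 1 = (j : ℝ) := by
      rw [Nat.cast_sub hj1]; ring
    rw [hidx, hj1', hcastj] at hPj
    have hadj' := congrArg (fun z : Euc d => (h ^ α) • z) hPj
    simp only [smul_smul, hrpow, mul_inv_cancel₀ hhα0.ne', one_smul] at hadj'
    exact hadj'
  -- partial derivative of L in x
  have hpartxL : ∀ (x₀ : Euc d) (v' : Euc m) (t' : ℝ),
      HasFDerivAt (fun x : Euc d => L x v' t')
        ((fderiv ℝ Lc (x₀, (v', t'))).comp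
          ((ContinuousLinearMap.id ℝ (Euc d)).prod (0 : Euc d →L[ℝ] Euc m × ℝ))) x₀ := by
    intro x₀ v' t'
    have hi : HasFDerivAt (fun x : Euc d => ((x, (v', t')) : Euc d × Euc m × ℝ))
        ((ContinuousLinearMap.id ℝ (Euc d)).prod 0) x₀ :=
      (hasFDerivAt_id x₀).prodMk (hasFDerivAt_const (v', t') x₀)
    exact ((hLdiff _).hasFDerivAt).comp x₀ hi
  -- inner products against the gradient and the adjoint
  have hgradL : ∀ (n : ℕ) (u : Euc d),
      ⟪gradient (fun x => L x (U n) (tt n)) (SQ U n), u⟫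
        = (fderiv ℝ Lc (SQ U n, (U n, tt n))) (u, ((0 : Euc m), (0 : ℝ))) := by
    intro n u
    have h1 : ⟪gradient (fun x => L x (U n) (tt n)) (SQ U n), u⟫
        = (fderiv ℝ (fun x => L x (U n) (tt n)) (SQ U n)) u := by
      unfold gradient
      exact InnerProductSpace.toDual_symm_apply
    rw [h1, (hpartxL (SQ U n) (U n) (tt n)).fderiv]
    rfl
  have hadjf : ∀ (n : ℕ) (w u : Euc d),
      ⟪(ContinuousLinearMap.adjoint
          (fderiv ℝ (fun x => f x (U n) (tt n)) (SQ U n))) w, u⟫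
        = ⟪w, (fderiv ℝ fc (SQ U n, (U n, tt n))) (u, ((0 : Euc m), (0 : ℝ)))⟫ := by
    intro n w u
    rw [ContinuousLinearMap.adjoint_inner_left, (hpartx (SQ U n) (U n) (tt n)).fderiv]
    rfl
  -- derivative of the cost functional
  have hmid : ∀ k : ℕ, HasDerivAt (fun ε : ℝ => U k + ε • Ubar k) (Ubar k) 0 := by
    intro k
    simpa using ((hasDerivAt_id (0 : ℝ)).smul_const (Ubar k)).const_add (U k)
  have hterm : ∀ k : ℕ, 1 ≤ k → k ≤ N → HasDerivAt
      (fun ε : ℝ => Lc (g ε ((k : Fin (N + 1))), (U k + ε • Ubar k, tt k)))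
      ((fderiv ℝ Lc (SQ U k, (U k, tt k)))
        (y ((k : Fin (N + 1))), (Ubar k, (0 : ℝ)))) 0 := by
    intro k hk1 hkN
    have hin : HasDerivAt (fun ε : ℝ =>
        ((g ε ((k : Fin (N + 1))), (U k + ε • Ubar k, tt k)) : Euc d × Euc m × ℝ))
        ((y ((k : Fin (N + 1))), (Ubar k, (0 : ℝ)))) 0 :=
      (hyi _).prodMk ((hmid k).prodMk (hasDerivAt_const _ _))
    have hLat : HasFDerivAt Lc (fderiv ℝ Lc (SQ U k, (U k, tt k)))
        (g 0 ((k : Fin (N + 1))), (U k + (0 : ℝ) • Ubar k, tt k)) := by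
      rw [hg0, hcast k hkN]
      simp only [zero_smul, add_zero]
      exact (hLdiff _).hasFDerivAt
    exact hLat.comp_hasDerivAt 0 hin
  have hcost : HasDerivAt (fun ε : ℝ => h * ∑ k ∈ Finset.Icc 1 N,
      Lc (g ε ((k : Fin (N + 1))), (U k + ε • Ubar k, tt k)))
      (h * ∑ k ∈ Finset.Icc 1 N, (fderiv ℝ Lc (SQ U k, (U k, tt k)))
        (y ((k : Fin (N + 1))), (Ubar k, (0 : ℝ)))) 0 := by
    refine HasDerivAt.const_mul h (HasDerivAt.fun_sum fun k hk => ?_)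
    obtain ⟨hk1, hkN⟩ := Finset.mem_Icc.mp hk
    exact hterm k hk1 hkN
  -- splitting of the differentials
  have hsplitL : ∀ (k : ℕ) (u : Euc d) (w : Euc m),
      (fderiv ℝ Lc (SQ U k, (U k, tt k))) (u, (w, (0 : ℝ)))
        = (fderiv ℝ Lc (SQ U k, (U k, tt k))) (u, ((0 : Euc m), (0 : ℝ)))
          + (fderiv ℝ Lc (SQ U k, (U k, tt k))) ((0 : Euc d), (w, (0 : ℝ))) := by
    intro k u w
    rw [← map_add]
    congr 1
    simp [Prod.ext_iff]
  have hsplitF : ∀ (k : ℕ) (u : Euc d) (w : Euc m),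
      (fderiv ℝ fc (SQ U k, (U k, tt k))) (u, (w, (0 : ℝ)))
        = (fderiv ℝ fc (SQ U k, (U k, tt k))) (u, ((0 : Euc m), (0 : ℝ)))
          + (fderiv ℝ fc (SQ U k, (U k, tt k))) ((0 : Euc d), (w, (0 : ℝ))) := by
    intro k u w
    rw [← map_add]
    congr 1
    simp [Prod.ext_iff]
  -- summation by parts, left side
  have hA : ∀ k : ℕ, 1 ≤ k → k ≤ N →
      ∑ j ∈ Finset.Icc 1 k, glCoef α (k - j) * ⟪P (k - 1), y ((j : Fin (N + 1)))⟫
        = h ^ α * ⟪P (k - 1), (fderiv ℝ fc (SQ U k, (U k, tt k)))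
            (y ((k : Fin (N + 1))), (Ubar k, (0 : ℝ)))⟫ := by
    intro k hk1 hkN
    have e1 := congrArg (fun z : Euc d => ⟪P (k - 1), z⟫) (hlin k hk1 hkN)
    simp only [inner_add_right, inner_sum, real_inner_smul_right] at e1
    calc ∑ j ∈ Finset.Icc 1 k, glCoef α (k - j) * ⟪P (k - 1), y ((j : Fin (N + 1)))⟫
        = ∑ j ∈ Finset.range (k + 1),
            glCoef α (k - j) * ⟪P (k - 1), y ((j : Fin (N + 1)))⟫ := by
          rw [sum_range_succ_eq_Icc (fun j => glCoef α (k - j)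
            * ⟪P (k - 1), y ((j : Fin (N + 1)))⟫) k]
          simp [hy0]
      _ = ∑ j ∈ Finset.range (k + 1), (fun r => glCoef α r
            * ⟪P (k - 1), y ((((k - r : ℕ)) : Fin (N + 1)))⟫) (k + 1 - 1 - j) := by
          refine Finset.sum_congr rfl fun j hj => ?_
          have hj' : j < k + 1 := Finset.mem_range.mp hj
          have e2 : k + 1 - 1 - j = k - j := by omega
          have e3 : k - (k - j) = j := by omega
          simp only [e2, e3]
      _ = ∑ r ∈ Finset.range (k + 1), glCoef α r
            * ⟪P (k - 1), y ((((k - r : ℕ)) : Fin (N + 1)))⟫ :=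
          Finset.sum_range_reflect
            (fun r => glCoef α r * ⟪P (k - 1), y ((((k - r : ℕ)) : Fin (N + 1)))⟫) (k + 1)
      _ = ⟪P (k - 1), y ((k : Fin (N + 1)))⟫ + ∑ r ∈ Finset.Icc 1 k,
            glCoef α r * ⟪P (k - 1), y ((((k - r : ℕ)) : Fin (N + 1)))⟫ := by
          rw [sum_range_succ_eq_Icc (fun r => glCoef α r
            * ⟪P (k - 1), y ((((k - r : ℕ)) : Fin (N + 1)))⟫) k]
          simp [glCoef_zero]
      _ = h ^ α * ⟪P (k - 1), (fderiv ℝ fc (SQ U k, (U k, tt k)))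
            (y ((k : Fin (N + 1))), (Ubar k, (0 : ℝ)))⟫ := e1
  -- summation by parts, right side
  have hB : ∀ j : ℕ, 1 ≤ j → j ≤ N →
      ∑ k ∈ Finset.Icc j N, glCoef α (k - j) * ⟪P (k - 1), y ((j : Fin (N + 1)))⟫
        = h ^ α * ((fderiv ℝ Lc (SQ U j, (U j, tt j)))
              (y ((j : Fin (N + 1))), ((0 : Euc m), (0 : ℝ)))
            + ⟪P (j - 1), (fderiv ℝ fc (SQ U j, (U j, tt j)))
              (y ((j : Fin (N + 1))), ((0 : Euc m), (0 : ℝ)))⟫) := by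
    intro j hj1 hjN
    have e1 := congrArg (fun z : Euc d => ⟪z, y ((j : Fin (N + 1)))⟫) (hadj j hj1 hjN)
    simp only [sum_inner, real_inner_smul_left, inner_add_left] at e1
    rw [hgradL j (y ((j : Fin (N + 1)))), hadjf j (P (j - 1)) (y ((j : Fin (N + 1))))] at e1
    calc ∑ k ∈ Finset.Icc j N, glCoef α (k - j) * ⟪P (k - 1), y ((j : Fin (N + 1)))⟫
        = ∑ r ∈ Finset.range (N - j + 1),
            glCoef α r * ⟪P (j - 1 + r), y ((j : Fin (N + 1)))⟫ := by
          rw [← Finset.Ico_add_one_right_eq_Icc, Finset.sum_Ico_eq_sum_range,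
            show N + 1 - j = N - j + 1 by omega]
          refine Finset.sum_congr rfl fun r hr => ?_
          rw [show j + r - j = r by omega, show j + r - 1 = j - 1 + r by omega]
      _ = ∑ r ∈ Finset.range (N - j + 2),
            glCoef α r * ⟪P (j - 1 + r), y ((j : Fin (N + 1)))⟫ := by
          rw [show N - j + 2 = (N - j + 1) + 1 by omega,
            Finset.sum_range_succ (fun r => glCoef α r
              * ⟪P (j - 1 + r), y ((j : Fin (N + 1)))⟫) (N - j + 1)]
          simp only [show j - 1 + (N - j + 1) = N by omega, hPN, inner_zero_left,
            mul_zero, add_zero]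
      _ = h ^ α * ((fderiv ℝ Lc (SQ U j, (U j, tt j)))
              (y ((j : Fin (N + 1))), ((0 : Euc m), (0 : ℝ)))
            + ⟪P (j - 1), (fderiv ℝ fc (SQ U j, (U j, tt j)))
              (y ((j : Fin (N + 1))), ((0 : Euc m), (0 : ℝ)))⟫) := e1
  -- exchanging the order of summation
  have hC : ∑ k ∈ Finset.Icc 1 N, ∑ j ∈ Finset.Icc 1 k,
        glCoef α (k - j) * ⟪P (k - 1), y ((j : Fin (N + 1)))⟫
      = ∑ j ∈ Finset.Icc 1 N, ∑ k ∈ Finset.Icc j N,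
        glCoef α (k - j) * ⟪P (k - 1), y ((j : Fin (N + 1)))⟫ := by
    simp_rw [← Finset.Ico_add_one_right_eq_Icc]
    exact (Finset.sum_Ico_Ico_comm 1 (N + 1)
      (fun i j => glCoef α (j - i) * ⟪P (j - 1), y ((i : Fin (N + 1)))⟫)).symm
  have hsum1 : ∑ k ∈ Finset.Icc 1 N, h ^ α * ⟪P (k - 1),
        (fderiv ℝ fc (SQ U k, (U k, tt k))) (y ((k : Fin (N + 1))), (Ubar k, (0 : ℝ)))⟫
      = ∑ j ∈ Finset.Icc 1 N, h ^ α * ((fderiv ℝ Lc (SQ U j, (U j, tt j)))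
            (y ((j : Fin (N + 1))), ((0 : Euc m), (0 : ℝ)))
          + ⟪P (j - 1), (fderiv ℝ fc (SQ U j, (U j, tt j)))
            (y ((j : Fin (N + 1))), ((0 : Euc m), (0 : ℝ)))⟫) := by
    rw [← Finset.sum_congr rfl fun k hk => hA k (Finset.mem_Icc.mp hk).1 (Finset.mem_Icc.mp hk).2,
      hC]
    exact Finset.sum_congr rfl fun j hj => hB j (Finset.mem_Icc.mp hj).1 (Finset.mem_Icc.mp hj).2
  -- the key identity
  have hkey : ∑ k ∈ Finset.Icc 1 N, (fderiv ℝ Lc (SQ U k, (U k, tt k)))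
        (y ((k : Fin (N + 1))), ((0 : Euc m), (0 : ℝ)))
      = ∑ k ∈ Finset.Icc 1 N, ⟪P (k - 1),
        (fderiv ℝ fc (SQ U k, (U k, tt k))) ((0 : Euc d), (Ubar k, (0 : ℝ)))⟫ := by
    have e := hsum1
    have e2 : ∀ k ∈ Finset.Icc 1 N, h ^ α * ⟪P (k - 1),
          (fderiv ℝ fc (SQ U k, (U k, tt k))) (y ((k : Fin (N + 1))), (Ubar k, (0 : ℝ)))⟫
        = h ^ α * ⟪P (k - 1), (fderiv ℝ fc (SQ U k, (U k, tt k)))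
            (y ((k : Fin (N + 1))), ((0 : Euc m), (0 : ℝ)))⟫
          + h ^ α * ⟪P (k - 1), (fderiv ℝ fc (SQ U k, (U k, tt k)))
            ((0 : Euc d), (Ubar k, (0 : ℝ)))⟫ := by
      intro k hk
      rw [hsplitF k (y ((k : Fin (N + 1)))) (Ubar k), inner_add_right, mul_add]
    have e3 : ∀ j ∈ Finset.Icc 1 N, h ^ α * ((fderiv ℝ Lc (SQ U j, (U j, tt j)))
          (y ((j : Fin (N + 1))), ((0 : Euc m), (0 : ℝ)))
        + ⟪P (j - 1), (fderiv ℝ fc (SQ U j, (U j, tt j)))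
          (y ((j : Fin (N + 1))), ((0 : Euc m), (0 : ℝ)))⟫)
        = h ^ α * (fderiv ℝ Lc (SQ U j, (U j, tt j)))
            (y ((j : Fin (N + 1))), ((0 : Euc m), (0 : ℝ)))
          + h ^ α * ⟪P (j - 1), (fderiv ℝ fc (SQ U j, (U j, tt j)))
            (y ((j : Fin (N + 1))), ((0 : Euc m), (0 : ℝ)))⟫ := fun j _ => mul_add _ _ _
    rw [Finset.sum_congr rfl e2, Finset.sum_add_distrib,
      Finset.sum_congr rfl e3, Finset.sum_add_distrib] at e
    have e4 : ∑ k ∈ Finset.Icc 1 N, h ^ α * ⟪P (k - 1),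
          (fderiv ℝ fc (SQ U k, (U k, tt k))) ((0 : Euc d), (Ubar k, (0 : ℝ)))⟫
        = ∑ k ∈ Finset.Icc 1 N, h ^ α * (fderiv ℝ Lc (SQ U k, (U k, tt k)))
            (y ((k : Fin (N + 1))), ((0 : Euc m), (0 : ℝ))) := by linarith
    rw [← Finset.mul_sum, ← Finset.mul_sum] at e4
    exact (mul_left_cancel₀ hhα0.ne' e4).symm
  -- the fderiv of the Hamiltonian in the control variable
  have htarget : ∀ k : ℕ, 1 ≤ k → k ≤ N →
      (fderiv ℝ (fun v => Ham L f (SQ U k) v (P (k - 1)) (tt k)) (U k)) (Ubar k)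
        = (fderiv ℝ Lc (SQ U k, (U k, tt k))) ((0 : Euc d), (Ubar k, (0 : ℝ)))
          + ⟪P (k - 1), (fderiv ℝ fc (SQ U k, (U k, tt k)))
            ((0 : Euc d), (Ubar k, (0 : ℝ)))⟫ := by
    intro k hk1 hkN
    have hι : HasFDerivAt (fun v : Euc m => ((SQ U k, (v, tt k)) : Euc d × Euc m × ℝ))
        ((0 : Euc m →L[ℝ] Euc d).prod
          ((ContinuousLinearMap.id ℝ (Euc m)).prod (0 : Euc m →L[ℝ] ℝ))) (U k) :=
      (hasFDerivAt_const _ _).prodMk ((hasFDerivAt_id _).prodMk (hasFDerivAt_const _ _))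
    have h1 : HasFDerivAt (fun v : Euc m => Lc (SQ U k, (v, tt k)))
        ((fderiv ℝ Lc (SQ U k, (U k, tt k))).comp
          ((0 : Euc m →L[ℝ] Euc d).prod
            ((ContinuousLinearMap.id ℝ (Euc m)).prod (0 : Euc m →L[ℝ] ℝ)))) (U k) :=
      ((hLdiff _).hasFDerivAt).comp _ hι
    have h2 : HasFDerivAt (fun v : Euc m => (⟪P (k - 1), fc (SQ U k, (v, tt k))⟫ : ℝ))
        ((innerSL ℝ (P (k - 1))).comp ((fderiv ℝ fc (SQ U k, (U k, tt k))).comp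
          ((0 : Euc m →L[ℝ] Euc d).prod
            ((ContinuousLinearMap.id ℝ (Euc m)).prod (0 : Euc m →L[ℝ] ℝ))))) (U k) :=
      ((innerSL ℝ (P (k - 1))).hasFDerivAt).comp _ (((hfdiff _).hasFDerivAt).comp _ hι)
    have h3 : HasFDerivAt (fun v => Ham L f (SQ U k) v (P (k - 1)) (tt k))
        ((fderiv ℝ Lc (SQ U k, (U k, tt k))).comp
          ((0 : Euc m →L[ℝ] Euc d).prod
            ((ContinuousLinearMap.id ℝ (Euc m)).prod (0 : Euc m →L[ℝ] ℝ)))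
         + (innerSL ℝ (P (k - 1))).comp ((fderiv ℝ fc (SQ U k, (U k, tt k))).comp
          ((0 : Euc m →L[ℝ] Euc d).prod
            ((ContinuousLinearMap.id ℝ (Euc m)).prod (0 : Euc m →L[ℝ] ℝ))))) (U k) :=
      h1.add h2
    rw [h3.fderiv]
    rfl
  -- assembling the derivative value
  have hval : h * ∑ k ∈ Finset.Icc 1 N, (fderiv ℝ Lc (SQ U k, (U k, tt k)))
        (y ((k : Fin (N + 1))), (Ubar k, (0 : ℝ)))
      = h * ∑ k ∈ Finset.Icc 1 N,
        (fderiv ℝ (fun v => Ham L f (SQ U k) v (P (k - 1)) (tt k)) (U k)) (Ubar k) := by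
    have e5 : ∀ k ∈ Finset.Icc 1 N, (fderiv ℝ Lc (SQ U k, (U k, tt k)))
          (y ((k : Fin (N + 1))), (Ubar k, (0 : ℝ)))
        = (fderiv ℝ Lc (SQ U k, (U k, tt k)))
            (y ((k : Fin (N + 1))), ((0 : Euc m), (0 : ℝ)))
          + (fderiv ℝ Lc (SQ U k, (U k, tt k))) ((0 : Euc d), (Ubar k, (0 : ℝ))) :=
      fun k _ => hsplitL k _ _
    rw [Finset.sum_congr rfl e5, Finset.sum_add_distrib, hkey, ← Finset.sum_add_distrib]
    congr 1
    refine Finset.sum_congr rfl fun k hk => ?_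
    obtain ⟨hk1, hkN⟩ := Finset.mem_Icc.mp hk
    rw [htarget k hk1 hkN]
    ring
  rw [hval] at hcost
  simp only [htt] at hcost
  have htend := hasDerivAt_iff_tendsto_slope.mp hcost
  refine Tendsto.congr (fun ε => ?_) htend
  rw [slope_def_field, sub_zero]
  congr 1
  congr 1
  · congr 1
    refine Finset.sum_congr rfl fun k hk => ?_
    obtain ⟨hk1, hkN⟩ := Finset.mem_Icc.mp hk
    simp only [hg, hpert, hcast k hkN, htt, hLc]
  · congr 1
    refine Finset.sum_congr rfl fun k hk => ?_
    obtain ⟨hk1, hkN⟩ := Finset.mem_Icc.mp hk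
    simp only [hg, hpert, hcast k hkN, htt, hLc, zero_smul, add_zero]
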